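/- Assume the metrics are strictly increasing: m_1 < m_2 < … < m_n. Let k* be the largest index i ∈ {1,…,n} such that 1/(1 + S_0 + Σ_{p=1}^{i} S_p) > m_i, with k* = 0 if no such index exists. Define x̂ ∈ [0,1]^n by: x̂_i = 1 for i ≤ k*; if k* < n then x̂_{k*+1} = max{0, min{1, (1/m_{k*+1} − (1 + S_0 + Σ_{p=1}^{k*} S_p))/S_{k*+1}}}; and x̂_i = 0 for i > k*+1. Then x̂ is a global maximizer of f on C. (This is the output of the aperture-selection step of the LiquidMAAS algorithm.) -/

import Mathlib

lemma liquidmaas_aux_bound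
    (n : ℕ) (ω β lam S0 : ℝ) (hω : 0 < ω) (hβ : 0 < β) (hS0 : 0 ≤ S0)
    (S ψ : ℕ → ℝ)
    (hS : ∀ i ∈ Finset.Icc 1 n, 0 < S i)
    (g f : (ℕ → ℝ) → ℝ)
    (hg : ∀ x, g x = 1 + S0 + ∑ i ∈ Finset.Icc 1 n, S i * x i)
    (hf : ∀ x, f x = ω * β * Real.log (g x) - ∑ i ∈ Finset.Icc 1 n, (lam + β * ψ i) * x i)
    (m : ℕ → ℝ) (hm : ∀ i, m i = (β * ψ i + lam) / (ω * β * S i))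
    (xhat y : ℕ → ℝ)
    (hx : ∀ i ∈ Finset.Icc 1 n, xhat i ∈ Set.Icc (0:ℝ) 1)
    (hy : ∀ i ∈ Finset.Icc 1 n, y i ∈ Set.Icc (0:ℝ) 1)
    (hsign : ∀ i ∈ Finset.Icc 1 n, (1 / g xhat - m i) * (y i - xhat i) ≤ 0) :
    f y ≤ f xhat := by
  have hpos : ∀ z : ℕ → ℝ, (∀ i ∈ Finset.Icc 1 n, z i ∈ Set.Icc (0:ℝ) 1) → 0 < g z := by
    intro z hz
    rw [hg]
    have h1 : 0 ≤ ∑ i ∈ Finset.Icc 1 n, S i * z i :=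
      Finset.sum_nonneg fun i hi => mul_nonneg (hS i hi).le (hz i hi).1
    linarith
  have hGy := hpos y hy
  have hGx := hpos xhat hx
  have hlog : Real.log (g y) ≤ Real.log (g xhat) + (g y - g xhat) / g xhat := by
    have h := Real.log_le_sub_one_of_pos (div_pos hGy hGx)
    rw [Real.log_div hGy.ne' hGx.ne'] at h
    have h2 : g y / g xhat - 1 = (g y - g xhat) / g xhat := by field_simp
    linarith
  have hdiff : g y - g xhat = ∑ i ∈ Finset.Icc 1 n, S i * (y i - xhat i) := by
    have h3 : ∑ i ∈ Finset.Icc 1 n, S i * (y i - xhat i)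
        = (∑ i ∈ Finset.Icc 1 n, S i * y i) - ∑ i ∈ Finset.Icc 1 n, S i * xhat i := by
      rw [← Finset.sum_sub_distrib]
      exact Finset.sum_congr rfl fun i _ => by ring
    rw [hg, hg, h3]; ring
  have key : ω * β * ((g y - g xhat) / g xhat)
      - ((∑ i ∈ Finset.Icc 1 n, (lam + β * ψ i) * y i)
        - ∑ i ∈ Finset.Icc 1 n, (lam + β * ψ i) * xhat i) ≤ 0 := by
    have hrw : ω * β * ((g y - g xhat) / g xhat)
        - ((∑ i ∈ Finset.Icc 1 n, (lam + β * ψ i) * y i)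
          - ∑ i ∈ Finset.Icc 1 n, (lam + β * ψ i) * xhat i)
        = ∑ i ∈ Finset.Icc 1 n,
            (ω * β * S i * ((1 / g xhat - m i) * (y i - xhat i))
              + (ω * β * S i * m i - (lam + β * ψ i)) * (y i - xhat i)) := by
      rw [hdiff, Finset.sum_div, Finset.mul_sum, ← Finset.sum_sub_distrib,
        ← Finset.sum_sub_distrib]
      exact Finset.sum_congr rfl fun i _ => by ring
    rw [hrw]
    apply Finset.sum_nonpos
    intro i hi
    have hSi := hS i hi
    have hc : ω * β * S i * m i - (lam + β * ψ i) = 0 := by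
      rw [hm]
      field_simp
      ring
    rw [hc, zero_mul, add_zero]
    have h1 : 0 ≤ ω * β * S i := by positivity
    exact mul_nonpos_of_nonneg_of_nonpos h1 (hsign i hi)
  rw [hf y, hf xhat]
  have hmul := mul_le_mul_of_nonneg_left hlog (le_of_lt (mul_pos hω hβ))
  rw [mul_add] at hmul
  linarith



/- STATEMENT 5: correctness of the aperture-selection step of LiquidMAAS.
   Indices 1,…,n are used (ℕ-indexed, with sums over Finset.Icc 1 n).
   Under strictly increasing metrics, with k* the largest index i for which
   1/(1+S_0+Σ_{p=1}^i S_p) > m_i (k* = 0 if none), the point x̂ with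
   x̂_i = 1 for i ≤ k*, x̂_{k*+1} given by the clamped fractional formula
   (when k* < n), and x̂_i = 0 for i > k*+1, is a global maximizer of f on
   the box C = [0,1]^n. -/
theorem liquidmaas_aperture_selection_optimal
    (n : ℕ) (hn : 1 ≤ n)
    (ω β lam S0 : ℝ) (hω : 0 < ω) (hβ : 0 < β) (hlam : 0 ≤ lam) (hS0 : 0 ≤ S0)
    (S ψ : ℕ → ℝ)
    (hS : ∀ i ∈ Finset.Icc 1 n, 0 < S i) (hψ : ∀ i ∈ Finset.Icc 1 n, 0 ≤ ψ i)
    (g f : (ℕ → ℝ) → ℝ)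
    (hg : ∀ x, g x = 1 + S0 + ∑ i ∈ Finset.Icc 1 n, S i * x i)
    (hf : ∀ x, f x = ω * β * Real.log (g x) - ∑ i ∈ Finset.Icc 1 n, (lam + β * ψ i) * x i)
    (m : ℕ → ℝ) (hm : ∀ i, m i = (β * ψ i + lam) / (ω * β * S i))
    (hmono : ∀ i j : ℕ, 1 ≤ i → i < j → j ≤ n → m i < m j)
    (kstar : ℕ) (hk_le : kstar ≤ n)
    (hk_max : ∀ i, 1 ≤ i → i ≤ n →
      1 / (1 + S0 + ∑ p ∈ Finset.Icc 1 i, S p) > m i → i ≤ kstar)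
    (hk_prop : kstar = 0 ∨
      (1 ≤ kstar ∧ 1 / (1 + S0 + ∑ p ∈ Finset.Icc 1 kstar, S p) > m kstar))
    (xhat : ℕ → ℝ)
    (hxhat : ∀ i, 1 ≤ i → i ≤ n → xhat i =
      if i ≤ kstar then 1
      else if i = kstar + 1 then
        max 0 (min 1
          ((1 / m (kstar + 1) - (1 + S0 + ∑ p ∈ Finset.Icc 1 kstar, S p)) / S (kstar + 1)))
      else 0) :
    (∀ i ∈ Finset.Icc 1 n, xhat i ∈ Set.Icc (0:ℝ) 1) ∧
    ∀ y : ℕ → ℝ, (∀ i ∈ Finset.Icc 1 n, y i ∈ Set.Icc (0:ℝ) 1) → f y ≤ f xhat := by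
  have hmem : ∀ i ∈ Finset.Icc 1 n, xhat i ∈ Set.Icc (0:ℝ) 1 := by
    intro i hi
    obtain ⟨h1, h2⟩ := Finset.mem_Icc.mp hi
    rw [hxhat i h1 h2, Set.mem_Icc]
    split_ifs with ha hb
    · exact ⟨zero_le_one, le_refl 1⟩
    · exact ⟨le_max_left 0 _, max_le zero_le_one (min_le_left _ _)⟩
    · exact ⟨le_refl 0, zero_le_one⟩
  refine ⟨hmem, ?_⟩
  have hsign : ∀ i, 1 ≤ i → i ≤ n → ∀ yi : ℝ, 0 ≤ yi → yi ≤ 1 →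
      (1 / g xhat - m i) * (yi - xhat i) ≤ 0 := by
    set Ak := 1 + S0 + ∑ p ∈ Finset.Icc 1 kstar, S p with hAk
    have hApos : ∀ j, j ≤ n → (0:ℝ) < 1 + S0 + ∑ p ∈ Finset.Icc 1 j, S p := by
      intro j hj
      have hnn : 0 ≤ ∑ p ∈ Finset.Icc 1 j, S p := by
        apply Finset.sum_nonneg
        intro p hp
        obtain ⟨hp1, hp2⟩ := Finset.mem_Icc.mp hp
        exact (hS p (Finset.mem_Icc.mpr ⟨hp1, hp2.trans hj⟩)).le
      linarith
    have hAkpos : 0 < Ak := hApos kstar hk_le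
    rcases Nat.lt_or_ge kstar n with hkn | hkn
    · -- kstar < n
      have hk1n : kstar + 1 ≤ n := hkn
      have hSk1 : 0 < S (kstar + 1) := hS _ (Finset.mem_Icc.mpr ⟨Nat.le_add_left 1 kstar, hk1n⟩)
      set r := (1 / m (kstar + 1) - Ak) / S (kstar + 1) with hr
      set t := max 0 (min 1 r) with ht
      have ht0 : 0 ≤ t := le_max_left _ _
      have ht1 : t ≤ 1 := max_le zero_le_one (min_le_left _ _)
      have hxk1 : xhat (kstar + 1) = t := by
        rw [hxhat (kstar + 1) (Nat.le_add_left 1 kstar) hk1n, if_neg (by omega), if_pos rfl]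
      -- m (kstar+1) lower bound from maximality
      have hAk1 : (1 + S0 + ∑ p ∈ Finset.Icc 1 (kstar + 1), S p) = Ak + S (kstar + 1) := by
        rw [hAk, Finset.sum_Icc_succ_top (Nat.le_add_left 1 kstar)]
        ring
      have hub1 : 1 / (Ak + S (kstar + 1)) ≤ m (kstar + 1) := by
        by_contra h
        push_neg at h
        have := hk_max (kstar + 1) (Nat.le_add_left 1 kstar) hk1n (by rw [hAk1]; exact h)
        omega
      have hmk1pos : 0 < m (kstar + 1) :=
        lt_of_lt_of_le (div_pos one_pos (by linarith)) hub1
      -- value of g xhat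
      have hG : g xhat = Ak + S (kstar + 1) * t := by
        rw [hg]
        have hterm : ∀ i ∈ Finset.Icc 1 n, S i * xhat i
            = (if i ≤ kstar then S i else 0) + (if i = kstar + 1 then S i * t else 0) := by
          intro i hi
          obtain ⟨h1, h2⟩ := Finset.mem_Icc.mp hi
          rcases le_or_gt i kstar with hik | hik
          · rw [hxhat i h1 h2, if_pos hik, if_pos hik, if_neg (by omega), mul_one, add_zero]
          · rcases eq_or_lt_of_le (show kstar + 1 ≤ i from hik) with hik' | hik'
            · have hieq : i = kstar + 1 := by omega
              subst hieq
              rw [hxk1, if_neg (by omega), if_pos rfl, zero_add]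
            · rw [hxhat i h1 h2, if_neg (by omega), if_neg (by omega), if_neg (by omega),
                if_neg (by omega), mul_zero, add_zero]
        rw [Finset.sum_congr rfl hterm, Finset.sum_add_distrib]
        have hsum1 : ∑ i ∈ Finset.Icc 1 n, (if i ≤ kstar then S i else 0)
            = ∑ p ∈ Finset.Icc 1 kstar, S p := by
          rw [← Finset.sum_filter]
          congr 1
          ext i
          simp only [Finset.mem_filter, Finset.mem_Icc]
          omega
        have hsum2 : ∑ i ∈ Finset.Icc 1 n, (if i = kstar + 1 then S i * t else 0)
            = S (kstar + 1) * t := by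
          rw [Finset.sum_ite_eq' (Finset.Icc 1 n) (kstar + 1) (fun i => S i * t)]
          rw [if_pos (Finset.mem_Icc.mpr ⟨Nat.le_add_left 1 kstar, hk1n⟩)]
        rw [hsum1, hsum2, hAk]
        ring
      have hGpos : 0 < g xhat := by
        have := mul_nonneg hSk1.le ht0
        rw [hG]; linarith
      -- key trichotomy
      have hkey : (t = 0 ∧ 1 / g xhat ≤ m (kstar + 1)) ∨ 1 / g xhat = m (kstar + 1) := by
        rcases le_or_gt r 0 with hr0 | hr0
        · left
          have htz : t = 0 := by
            rw [ht, max_eq_left (le_trans (min_le_right 1 r) hr0)]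
          have hrS : 1 / m (kstar + 1) - Ak ≤ 0 := by
            rcases div_nonpos_iff.mp (hr ▸ hr0) with ⟨ha, hb⟩ | ⟨ha, hb⟩
            · linarith
            · linarith
          have h1m : 1 ≤ Ak * m (kstar + 1) := by
            have := (div_le_iff₀ hmk1pos).mp (by linarith : 1 / m (kstar + 1) ≤ Ak)
            linarith
          have hGA : g xhat = Ak := by rw [hG, htz]; ring
          refine ⟨htz, ?_⟩
          rw [hGA]
          exact (div_le_iff₀ hAkpos).mpr (by linarith)
        · right
          rcases le_or_gt 1 r with hr1 | hr1
          · -- t = 1, g xhat = Ak + S, and m = 1/(Ak+S)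
            have ht1' : t = 1 := by
              rw [ht, min_eq_left hr1, max_eq_right zero_le_one]
            have hge : Ak + S (kstar + 1) ≤ 1 / m (kstar + 1) := by
              have := (le_div_iff₀ hSk1).mp hr1
              linarith
            have hle' : m (kstar + 1) ≤ 1 / (Ak + S (kstar + 1)) := by
              rw [le_div_iff₀ (by linarith : (0:ℝ) < Ak + S (kstar + 1))]
              have := (le_div_iff₀ hmk1pos).mp hge
              linarith [mul_comm (m (kstar + 1)) (Ak + S (kstar + 1))]
            have heq : m (kstar + 1) = 1 / (Ak + S (kstar + 1)) :=
              le_antisymm hle' hub1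
            rw [hG, ht1', mul_one, heq]
          · -- t = r, g xhat = 1/m
            have htr : t = r := by
              rw [ht, min_eq_right hr1.le, max_eq_right hr0.le]
            have hGm : g xhat = 1 / m (kstar + 1) := by
              rw [hG, htr, hr, mul_div_cancel₀ _ hSk1.ne']
              ring
            rw [hGm, one_div_one_div]
      have hub : 1 / g xhat ≤ m (kstar + 1) := by
        rcases hkey with ⟨_, h⟩ | h
        · exact h
        · exact le_of_eq h
      have hle : ∀ i, 1 ≤ i → i ≤ kstar → m i ≤ 1 / g xhat := by
        intro i h1 hik
        have hmik1 : m i < m (kstar + 1) := hmono i (kstar + 1) h1 (by omega) hk1n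
        rcases hkey with ⟨htz, _⟩ | heq
        · have hGA : g xhat = Ak := by rw [hG, htz]; ring
          have hkp : m kstar < 1 / Ak := by
            rcases hk_prop with h0 | ⟨_, h⟩
            · omega
            · exact h
          have hmik : m i ≤ m kstar := by
            rcases eq_or_lt_of_le hik with h' | h'
            · rw [h']
            · exact (hmono i kstar h1 h' (le_trans hk_le (le_refl n))).le
          rw [hGA]
          linarith
        · rw [heq]
          exact hmik1.le
      intro i h1 h2 yi hy0 hy1
      rcases le_or_gt i kstar with hik | hik
      · have hx1 : xhat i = 1 := by rw [hxhat i h1 h2, if_pos hik]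
        rw [hx1]
        exact mul_nonpos_iff.mpr (Or.inl ⟨by linarith [hle i h1 hik], by linarith⟩)
      · rcases eq_or_lt_of_le (show kstar + 1 ≤ i from hik) with hik' | hik'
        · have hieq : i = kstar + 1 := by omega
          subst hieq
          rw [hxk1]
          rcases hkey with ⟨htz, hub'⟩ | heq
          · rw [htz]
            exact mul_nonpos_iff.mpr (Or.inr ⟨by linarith, by linarith⟩)
          · have : 1 / g xhat - m (kstar + 1) = 0 := by rw [heq]; ring
            rw [this, zero_mul]
        · have hx0 : xhat i = 0 := by
            rw [hxhat i h1 h2, if_neg (by omega), if_neg (by omega)]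
          have hmi : m (kstar + 1) < m i := hmono (kstar + 1) i (Nat.le_add_left 1 kstar) hik' h2
          rw [hx0]
          exact mul_nonpos_iff.mpr (Or.inr ⟨by linarith, by linarith⟩)
    · -- kstar = n
      have hkeq : kstar = n := le_antisymm hk_le hkn
      have hall1 : ∀ i, 1 ≤ i → i ≤ n → xhat i = 1 := by
        intro i h1 h2
        rw [hxhat i h1 h2, if_pos (by omega)]
      have hG : g xhat = Ak := by
        rw [hg, hAk, hkeq]
        congr 1
        exact Finset.sum_congr rfl fun i hi => by
          obtain ⟨h1, h2⟩ := Finset.mem_Icc.mp hi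
          rw [hall1 i h1 h2, mul_one]
      have hkp : m kstar < 1 / Ak := by
        rcases hk_prop with h0 | ⟨_, h⟩
        · omega
        · exact h
      intro i h1 h2 yi hy0 hy1
      have hmik : m i ≤ m kstar := by
        rcases eq_or_lt_of_le (show i ≤ kstar by omega) with h' | h'
        · rw [h']
        · exact (hmono i kstar h1 h' hk_le).le
      have hx1 : xhat i = 1 := hall1 i h1 h2
      rw [hx1, hG]
      exact mul_nonpos_iff.mpr (Or.inl ⟨by linarith, by linarith⟩)
  intro y hy
  apply liquidmaas_aux_bound n ω β lam S0 hω hβ hS0 S ψ hS g f hg hf m hm xhat y hmem hy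
  intro i hi
  obtain ⟨h1, h2⟩ := Finset.mem_Icc.mp hi
  exact hsign i h1 h2 (y i) (hy i hi).1 (hy i hi).2
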